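/- A type B partition d_B ∈ P_1(2n+1) is special (i.e., its transpose is again of type B) if and only if its unique block decomposition into types B1, B1*, B2, B3 contains no block of type B1*. -/

import Mathlib

/-- `[b₁, b₁, b₂, b₂, ...]`: each entry of `bs` doubled. -/
def pairList (bs : List ℕ) : List ℕ := bs.flatMap fun b => [b, b]

/-- Type B1 block: `[a, a]` with `a` odd. -/
def IsB1 (T : List ℕ) : Prop := ∃ a, Odd a ∧ T = [a, a]

/-- Type B1* block: `[b, b]` with `b` even (and positive). -/
def IsB1s (T : List ℕ) : Prop := ∃ b, 0 < b ∧ Even b ∧ T = [b, b]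

/-- Type B2 block: `[a₁, b₁², ..., b_k², a₂]` with `a₁, a₂` odd, all `b_j` even,
`a₁ > b₁ ≥ ... ≥ b_k > a₂` and `k ≥ 0`. -/
def IsB2 (T : List ℕ) : Prop :=
  ∃ a₁ a₂ bs, Odd a₁ ∧ Odd a₂ ∧ a₂ < a₁ ∧
    (∀ b ∈ bs, Even b ∧ a₂ < b ∧ b < a₁) ∧ List.Pairwise (· ≥ ·) bs ∧
    T = a₁ :: (pairList bs ++ [a₂])

/-- Type B3 block: `[a, b₁², ..., b_k²]` with `a` odd, all `b_j` even (positive),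
`a > b₁ ≥ ... ≥ b_k`, `k ≥ 0`. -/
def IsB3 (T : List ℕ) : Prop :=
  ∃ a bs, Odd a ∧ (∀ b ∈ bs, 0 < b ∧ Even b ∧ b < a) ∧ List.Pairwise (· ≥ ·) bs ∧
    T = a :: pairList bs

/-- A type B partition of `N`, as a weakly decreasing list of positive integers summing
to `N` in which every even part occurs with even multiplicity. -/
def IsTypeBList (d : List ℕ) (N : ℕ) : Prop :=
  List.Pairwise (· ≥ ·) d ∧ (∀ x ∈ d, 0 < x) ∧ d.sum = N ∧
    ∀ i, Even i → Even (d.count i)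

/-- `Ts` is a decomposition of `d` into consecutive blocks of types B1, B1*, B2, B3. -/
def IsBlockDecomp (d : List ℕ) (Ts : List (List ℕ)) : Prop :=
  d = Ts.flatten ∧ ∀ T ∈ Ts, IsB1 T ∨ IsB1s T ∨ IsB2 T ∨ IsB3 T

/-- The block of type B3 appears exactly once, and at the end. -/
def B3AtEnd (Ts : List (List ℕ)) : Prop :=
  ∃ Ts' T, Ts = Ts' ++ [T] ∧ IsB3 T ∧ ∀ T' ∈ Ts', ¬ IsB3 T'


/-- The transpose (dual) partition of a list partition:
entry `i` (0-indexed) is `#{x ∈ d : x ≥ i + 1}`. -/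
def transposeL (d : List ℕ) : List ℕ :=
  (List.range d.headI).map fun i => d.countP fun x => decide (i + 1 ≤ x)

/-! ### pairList / PairEven basics -/

inductive PairEven : List ℕ → Prop
  | nil : PairEven []
  | single (x : ℕ) : Even x → PairEven [x]
  | pair (x y : ℕ) (t : List ℕ) : Even (x + y) → PairEven t → PairEven (x :: y :: t)

theorem pairEven_sum {l : List ℕ} (h : PairEven l) : Even l.sum := by
  induction h with
  | nil => simp
  | single x hx => simpa using hx
  | pair x y t hxy ht ih =>
    obtain ⟨a, ha⟩ := hxy; obtain ⟨b, hb⟩ := ih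
    exact ⟨a + b, by simp only [List.sum_cons]; omega⟩

theorem pairList_cons (b : ℕ) (bs : List ℕ) : pairList (b :: bs) = b :: b :: pairList bs := rfl

theorem mem_pairList {b : ℕ} {bs : List ℕ} : b ∈ pairList bs ↔ b ∈ bs := by
  simp [pairList]

theorem pairList_length (bs : List ℕ) : (pairList bs).length = 2 * bs.length := by
  induction bs with
  | nil => rfl
  | cons b bs ih => simp [pairList_cons, ih]; omega

theorem pairList_sum (bs : List ℕ) : (pairList bs).sum = 2 * bs.sum := by
  induction bs with
  | nil => rfl
  | cons b bs ih => simp [pairList_cons, ih]; omega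

theorem pairEven_pairList_append {bs : List ℕ} {l : List ℕ} (h : PairEven l) :
    PairEven (pairList bs ++ l) := by
  induction bs with
  | nil => simpa
  | cons b bs ih => exact PairEven.pair b b _ (by simp [Nat.even_add]) ih

theorem pairEven_of_pairList_append {bs : List ℕ} {l : List ℕ}
    (h : PairEven (pairList bs ++ l)) : PairEven l := by
  induction bs with
  | nil => simpa [pairList] using h
  | cons b bs ih =>
    rw [pairList_cons] at h
    cases h with
    | pair x y t hxy ht => exact ih ht

theorem pairEven_getD {l : List ℕ} (h : PairEven l) :
    ∀ k, Even (l.getD (2*k) 0 + l.getD (2*k+1) 0) := by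
  induction h with
  | nil => intro k; simp
  | single x hx =>
    intro k
    cases k with
    | zero => simpa using hx
    | succ m => simp [List.getD, Nat.mul_succ]
  | pair x y t hxy ht ih =>
    intro k
    cases k with
    | zero => simpa using hxy
    | succ m => simpa [Nat.mul_succ] using ih m

theorem pairEven_of_getD : ∀ l : List ℕ,
    (∀ k, Even (l.getD (2*k) 0 + l.getD (2*k+1) 0)) → PairEven l
  | [], _ => .nil
  | [x], h => .single x (by simpa using h 0)
  | x :: y :: t, h =>
    .pair x y t (by simpa using h 0)
      (pairEven_of_getD t (fun k => by simpa [Nat.mul_succ] using h (k+1)))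

theorem exists_pairList : ∀ (e : List ℕ), e.Pairwise (· ≥ ·) → (∀ x, Even (e.count x)) →
    ∃ bs, bs.Pairwise (· ≥ ·) ∧ e = pairList bs
  | [], _, _ => ⟨[], List.Pairwise.nil, rfl⟩
  | [x], hs, hc => by
    have := Nat.even_iff.mp (hc x); simp [List.count_cons] at this
  | x :: y :: r, hs, hc => by
    obtain ⟨hx1, hs1⟩ := List.pairwise_cons.mp hs
    obtain ⟨hy1, hs2⟩ := List.pairwise_cons.mp hs1
    have hyx : y = x := by
      have h2 : 2 ≤ (x :: y :: r).count x := by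
        have h1 : 0 < (x :: y :: r).count x := List.count_pos_iff.mpr (by simp)
        have := Nat.even_iff.mp (hc x); omega
      by_contra hne
      have hxr : x ∈ r := by
        simpa [List.count_cons, Ne.symm hne, hne] using h2
      exact hne (le_antisymm (hx1 y (by simp)) (hy1 x hxr))
    subst hyx
    have hcr : ∀ z, Even (r.count z) := by
      intro z
      have h := Nat.even_iff.mp (hc z)
      rw [Nat.even_iff]
      by_cases hzy : y = z <;> simp [List.count_cons, hzy] at h ⊢ <;> omega
    obtain ⟨bs, hbs, rfl⟩ := exists_pairList r hs2 hcr
    exact ⟨y :: bs, List.pairwise_cons.mpr ⟨fun b hb => hy1 b (mem_pairList.mpr hb), hbs⟩, rfl⟩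

/-! ### shape lemmas -/

theorem IsB1.not_b1s {T : List ℕ} (h : IsB1 T) : ¬ IsB1s T := by
  obtain ⟨a, ha, rfl⟩ := h
  rintro ⟨b, -, hb, heq⟩
  simp at heq
  subst heq
  rw [Nat.odd_iff] at ha; rw [Nat.even_iff] at hb; omega

theorem IsB2.len_even {T : List ℕ} (h : IsB2 T) : Even T.length := by
  obtain ⟨a₁, a₂, bs, _, _, _, _, _, rfl⟩ := h
  simp [Nat.even_iff, pairList_length]

theorem IsB1.len {T : List ℕ} (h : IsB1 T) : T.length = 2 := by
  obtain ⟨a, _, rfl⟩ := h; rfl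

theorem IsB3.len_odd {T : List ℕ} (h : IsB3 T) : Odd T.length := by
  obtain ⟨a, bs, _, _, _, rfl⟩ := h
  simp [Nat.odd_iff, pairList_length]

theorem IsB1s.len {T : List ℕ} (h : IsB1s T) : T.length = 2 := by
  obtain ⟨b, _, _, rfl⟩ := h; rfl

theorem IsB2.not_b1s {T : List ℕ} (h : IsB2 T) : ¬ IsB1s T := by
  obtain ⟨a₁, a₂, bs, ha₁, ha₂, hlt, hbs, hsort, rfl⟩ := h
  rintro ⟨b, -, hb, heq⟩
  have hl := congrArg List.length heq
  simp [pairList_length] at hl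
  subst hl
  simp only [pairList, List.flatMap_nil, List.nil_append] at heq
  simp at heq
  obtain ⟨h1, -⟩ := heq
  subst h1
  rw [Nat.odd_iff] at ha₁; rw [Nat.even_iff] at hb
  omega

theorem IsB3.not_b1s {T : List ℕ} (h : IsB3 T) : ¬ IsB1s T := by
  intro h2
  have := h.len_odd
  rw [h2.len] at this
  simp [Nat.odd_iff] at this

theorem IsB1.not_b3 {T : List ℕ} (h : IsB1 T) : ¬ IsB3 T := by
  intro h3
  have := h3.len_odd
  rw [h.len] at this
  simp [Nat.odd_iff] at this

theorem IsB2.not_b3 {T : List ℕ} (h : IsB2 T) : ¬ IsB3 T := by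
  intro h3
  have h1 := h3.len_odd
  have h2 := h.len_even
  rw [Nat.odd_iff] at h1; rw [Nat.even_iff] at h2
  omega

/-! ### SpecL: reverse direction -/

def SpecL (l : List ℕ) : Prop := ∃ a t, l = a :: t ∧ Odd a ∧ PairEven t

theorem specL_b3 {T : List ℕ} (h : IsB3 T) : SpecL T := by
  obtain ⟨a, bs, ha, _, _, rfl⟩ := h
  exact ⟨a, pairList bs, rfl, ha,
    by simpa using pairEven_pairList_append (bs := bs) (l := []) .nil⟩

theorem specL_append_b1 {T l : List ℕ} (h : IsB1 T) (hl : SpecL l) : SpecL (T ++ l) := by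
  obtain ⟨a, ha, rfl⟩ := h
  obtain ⟨a', t, rfl, ha', hp⟩ := hl
  exact ⟨a, a :: a' :: t, rfl, ha, .pair a a' t (ha.add_odd ha') hp⟩

theorem specL_append_b2 {T l : List ℕ} (h : IsB2 T) (hl : SpecL l) : SpecL (T ++ l) := by
  obtain ⟨a₁, a₂, bs, h1, h2, _, _, _, rfl⟩ := h
  obtain ⟨a', t, rfl, ha', hp⟩ := hl
  exact ⟨a₁, pairList bs ++ (a₂ :: a' :: t), by simp, h1,
    pairEven_pairList_append (.pair a₂ a' t (h2.add_odd ha') hp)⟩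

theorem specL_flatten : ∀ (Ts' : List (List ℕ)) (Tl : List ℕ), IsB3 Tl →
    (∀ T ∈ Ts', IsB1 T ∨ IsB2 T) → SpecL ((Ts' ++ [Tl]).flatten)
  | [], Tl, h3, _ => by simpa using specL_b3 h3
  | T :: Ts', Tl, h3, hT => by
    have hrec := specL_flatten Ts' Tl h3 (fun T' hT' => hT T' (List.mem_cons_of_mem _ hT'))
    rcases hT T (by simp) with h | h
    · simpa using specL_append_b1 h hrec
    · simpa using specL_append_b2 h hrec

/-! ### construction -/

theorem even_split (t : List ℕ) : ∃ e t', t = e ++ t' ∧ (∀ x ∈ e, Even x) ∧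
    ∀ o t'', t' = o :: t'' → ¬ Even o := by
  induction t with
  | nil => exact ⟨[], [], rfl, by simp, by simp⟩
  | cons x r ih =>
    by_cases hx : Even x
    · obtain ⟨e, t', h1, h2, h3⟩ := ih
      exact ⟨x :: e, t', by simp [h1], by
        intro y hy
        rcases List.mem_cons.mp hy with rfl | hy
        · exact hx
        · exact h2 y hy, h3⟩
    · exact ⟨[], x :: r, rfl, by simp, by
        rintro o t'' h
        injection h with h1 h2
        subst h1
        exact hx⟩

theorem build : ∀ (N : ℕ) (d : List ℕ), d.length ≤ N → d.Pairwise (· ≥ ·) → (∀ x ∈ d, 0 < x) →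
    (∀ x, Even x → Even (d.count x)) → Odd d.sum → PairEven d.tail →
    ∃ Ts, d = Ts.flatten ∧ (∀ T ∈ Ts, IsB1 T ∨ IsB2 T ∨ IsB3 T) ∧ B3AtEnd Ts ∧
      ∀ T ∈ Ts, ¬ IsB1s T := by
  intro N
  induction N with
  | zero =>
    intro d hlen _ _ _ hsum _
    rw [List.length_eq_zero_iff.mp (Nat.le_zero.mp hlen)] at hsum
    simp [Nat.odd_iff] at hsum
  | succ N ih =>
    intro d hlen hsort hpos hcount hsum hpe
    cases d with
    | nil => simp [Nat.odd_iff] at hsum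
    | cons a t =>
      have hpe' : PairEven t := hpe
      have hts : Even t.sum := pairEven_sum hpe'
      have ha : Odd a := by
        rw [List.sum_cons, Nat.odd_iff] at hsum
        rw [Nat.even_iff] at hts
        rw [Nat.odd_iff]
        omega
      obtain ⟨e, t', het, hee, hhead⟩ := even_split t
      subst het
      obtain ⟨hage, htsort⟩ := List.pairwise_cons.mp hsort
      obtain ⟨hesort, ht'sort, hcross⟩ := List.pairwise_append.mp htsort
      -- counts in e are even
      have hce : ∀ x, Even (e.count x) := by
        intro x
        by_cases hex : Even x
        · by_cases hxe : x ∈ e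
          · have hxt' : x ∉ t' := by
              intro hxt'
              cases ht2 : t' with
              | nil => rw [ht2] at hxt'; simp at hxt'
              | cons o t'' =>
                rw [ht2] at hxt'
                have ho : ¬ Even o := hhead o t'' ht2
                have hxo : x ≥ o := hcross x hxe o (by rw [ht2]; simp)
                rcases List.mem_cons.mp hxt' with rfl | hxt''
                · exact ho hex
                · have : o ≥ x := by
                    rw [ht2] at ht'sort
                    exact (List.pairwise_cons.mp ht'sort).1 x hxt''
                  have : x = o := le_antisymm this hxo
                  subst this
                  exact ho hex
            have hax : ¬ (a = x) := by
              rw [Nat.odd_iff] at ha; rw [Nat.even_iff] at hex; omega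
            have h1 := Nat.even_iff.mp (hcount x hex)
            rw [Nat.even_iff]
            rw [List.count_cons, List.count_append] at h1
            rw [List.count_eq_zero.mpr hxt'] at h1
            simp [hax] at h1
            omega
          · rw [List.count_eq_zero.mpr hxe]; exact Even.zero
        · rw [List.count_eq_zero.mpr (fun hm => hex (hee x hm))]; exact Even.zero
      obtain ⟨bs, hbssort, rfl⟩ := exists_pairList e hesort hce
      cases ht2 : t' with
      | nil =>
        subst ht2
        refine ⟨[a :: pairList bs], by simp, ?_, ⟨[], a :: pairList bs, by simp, ?_, by simp⟩, ?_⟩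
        · intro T hT
          rw [List.mem_singleton] at hT
          subst hT
          right; right
          refine ⟨a, bs, ha, ?_, hbssort, by simp⟩
          intro b hb
          have hbe : b ∈ pairList bs := mem_pairList.mpr hb
          refine ⟨hpos b (by simp [hbe]), hee b hbe, ?_⟩
          have hba : a ≥ b := hage b (by simp [hbe])
          have : ¬ (b = a) := by
            have := hee b hbe
            rw [Nat.odd_iff] at ha; rw [Nat.even_iff] at this; omega
          omega
        · refine ⟨a, bs, ha, ?_, hbssort, rfl⟩
          intro b hb
          have hbe : b ∈ pairList bs := mem_pairList.mpr hb
          refine ⟨hpos b (by simp [hbe]), hee b hbe, ?_⟩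
          have hba : a ≥ b := hage b (by simp [hbe])
          have : ¬ (b = a) := by
            have := hee b hbe
            rw [Nat.odd_iff] at ha; rw [Nat.even_iff] at this; omega
          omega
        · intro T hT
          rw [List.mem_singleton] at hT
          subst hT
          exact IsB3.not_b1s ⟨a, bs, ha, by
            intro b hb
            have hbe : b ∈ pairList bs := mem_pairList.mpr hb
            refine ⟨hpos b (by simp [hbe]), hee b hbe, ?_⟩
            have hba : a ≥ b := hage b (by simp [hbe])
            have : ¬ (b = a) := by
              have := hee b hbe
              rw [Nat.odd_iff] at ha; rw [Nat.even_iff] at this; omega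
            omega, hbssort, rfl⟩
      | cons a2 t'' =>
        subst ht2
        have ho2 : Odd a2 := Nat.not_even_iff_odd.mp (hhead a2 t'' rfl)
        -- bounds
        have hb_bounds : ∀ b ∈ bs, Even b ∧ a2 ≤ b ∧ b < a := by
          intro b hb
          have hbe : b ∈ pairList bs := mem_pairList.mpr hb
          have hbev := hee b hbe
          have hba : a ≥ b := hage b (by simp [hbe])
          have hbna : ¬ (b = a) := by
            rw [Nat.odd_iff] at ha; rw [Nat.even_iff] at hbev; omega
          have hba2 : b ≥ a2 := hcross b hbe a2 (by simp)
          exact ⟨hbev, hba2, by omega⟩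
        -- recursion invariants for t''
        have hsort'' : t''.Pairwise (· ≥ ·) := (List.pairwise_cons.mp ht'sort).2
        have hpos'' : ∀ x ∈ t'', 0 < x := fun x hx => hpos x (by simp [hx])
        have hcount'' : ∀ x, Even x → Even (t''.count x) := by
          intro x hex
          have hax : ¬ (a = x) := by
            rw [Nat.odd_iff] at ha; rw [Nat.even_iff] at hex; omega
          have ha2x : ¬ (a2 = x) := by
            rw [Nat.odd_iff] at ho2; rw [Nat.even_iff] at hex; omega
          have h1 := Nat.even_iff.mp (hcount x hex)
          have h2 := Nat.even_iff.mp (hce x)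
          rw [Nat.even_iff]
          rw [List.count_cons, List.count_append, List.count_cons] at h1
          simp [hax, ha2x] at h1
          omega
        have hsum'' : Odd t''.sum := by
          rw [List.sum_cons, List.sum_append, List.sum_cons, Nat.odd_iff] at hsum
          rw [pairList_sum] at hsum
          rw [Nat.odd_iff] at ha ho2 ⊢
          omega
        have hpe'' : PairEven t''.tail := by
          have h1 : PairEven (a2 :: t'') := pairEven_of_pairList_append hpe'
          cases h1 with
          | single _ _ => exact .nil
          | pair x y s hxy hs => exact hs
        have hlen'' : t''.length ≤ N := by
          simp [pairList_length] at hlen ⊢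
          omega
        obtain ⟨Ts₂, hflat₂, hblocks₂, ⟨Ts₂', Tl, hTs₂eq, hTl, hTs₂'⟩, hnb1s₂⟩ :=
          ih t'' hlen'' hsort'' hpos'' hcount'' hsum'' hpe''
        -- the block
        have hT12 : IsB1 (a :: (pairList bs ++ [a2])) ∨ IsB2 (a :: (pairList bs ++ [a2])) := by
          by_cases haa : a2 = a
          · left
            have hbs0 : bs = [] := by
              rw [List.eq_nil_iff_forall_not_mem]
              intro b hb
              obtain ⟨hbev, hba2, hba⟩ := hb_bounds b hb
              omega
            subst hbs0
            subst haa
            exact ⟨a2, ho2, by simp [pairList]⟩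
          · right
            have ha2a : a2 < a := lt_of_le_of_ne (hage a2 (by simp)) haa
            refine ⟨a, a2, bs, ha, ho2, ha2a, ?_, hbssort, rfl⟩
            intro b hb
            obtain ⟨hbev, hba2, hba⟩ := hb_bounds b hb
            have : ¬ (b = a2) := by
              rw [Nat.odd_iff] at ho2; rw [Nat.even_iff] at hbev; omega
            exact ⟨hbev, by omega, hba⟩
        refine ⟨(a :: (pairList bs ++ [a2])) :: Ts₂, ?_, ?_, ?_, ?_⟩
        · simp [← hflat₂]
        · intro T hT
          rcases List.mem_cons.mp hT with rfl | hT
          · rcases hT12 with h | h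
            · exact Or.inl h
            · exact Or.inr (Or.inl h)
          · exact hblocks₂ T hT
        · refine ⟨(a :: (pairList bs ++ [a2])) :: Ts₂', Tl, by simp [hTs₂eq], hTl, ?_⟩
          intro T' hT'
          rcases List.mem_cons.mp hT' with rfl | hT'
          · rcases hT12 with h | h
            · exact h.not_b3
            · exact h.not_b3
          · exact hTs₂' T' hT'
        · intro T hT
          rcases List.mem_cons.mp hT with rfl | hT
          · rcases hT12 with h | h
            · exact h.not_b1s
            · exact h.not_b1s
          · exact hnb1s₂ T hT


theorem list_range_map_sum (n : ℕ) (f : ℕ → ℕ) :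
    ((List.range n).map f).sum = ∑ i ∈ Finset.range n, f i := by
  induction n with
  | zero => simp
  | succ n ih => simp [List.range_succ, Finset.sum_range_succ, ih]

theorem sum_ite_range (x h : ℕ) :
    (∑ i ∈ Finset.range h, if i + 1 ≤ x then 1 else 0) = min x h := by
  induction h with
  | zero => simp
  | succ h ih =>
    rw [Finset.sum_range_succ, ih]
    by_cases hc : h + 1 ≤ x <;> simp [hc] <;> omega

theorem transpose_sum_aux (h : ℕ) : ∀ (d : List ℕ), (∀ x ∈ d, x ≤ h) →
    (∑ i ∈ Finset.range h, d.countP (fun x => decide (i + 1 ≤ x))) = d.sum := by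
  intro d
  induction d with
  | nil => simp
  | cons x r ih =>
    intro H
    simp only [List.countP_cons, decide_eq_true_eq]
    rw [Finset.sum_add_distrib, ih (fun y hy => H y (by simp [hy])), sum_ite_range,
      min_eq_left (H x (by simp)), List.sum_cons]
    omega

theorem countP_range_ite (lo hi n : ℕ) :
    (List.range n).countP (fun i => decide (lo ≤ i ∧ i < hi)) = min hi n - min lo n := by
  induction n with
  | zero => simp
  | succ n ih =>
    rw [List.range_succ, List.countP_append, ih]
    by_cases h1 : lo ≤ n ∧ n < hi <;> simp [List.countP_cons, h1] <;> omega

theorem countP_ge (t : ℕ) (ht : 1 ≤ t) : ∀ (d : List ℕ) (v : ℕ), d.Pairwise (· ≥ ·) →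
    (v + 1 ≤ d.countP (fun x => decide (t ≤ x)) ↔ t ≤ d.getD v 0) := by
  intro d
  induction d with
  | nil => intro v _; simp [List.getD]; omega
  | cons x r ih =>
    intro v hs
    obtain ⟨h1, h2⟩ := List.pairwise_cons.mp hs
    rw [List.countP_cons]
    cases v with
    | zero =>
      simp only [List.getD_cons_zero]
      constructor
      · intro h
        by_contra htx
        have h0 : r.countP (fun x => decide (t ≤ x)) = 0 := by
          rw [List.countP_eq_zero]
          intro y hy
          simp only [decide_eq_true_eq]
          have := h1 y hy
          omega
        simp [htx, h0] at h
      · intro h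
        simp [h]
    | succ v =>
      rw [List.getD_cons_succ, ← ih v h2]
      by_cases htx : t ≤ x
      · simp [htx]
      · have h0 : r.countP (fun x => decide (t ≤ x)) = 0 := by
          rw [List.countP_eq_zero]
          intro y hy
          simp only [decide_eq_true_eq]
          have := h1 y hy
          omega
        simp [htx, h0]

theorem getD_le_headI {d : List ℕ} (hs : d.Pairwise (· ≥ ·)) (v : ℕ) : d.getD v 0 ≤ d.headI := by
  cases d with
  | nil => simp [List.getD]
  | cons x r =>
    cases v with
    | zero => simp
    | succ v =>
      rw [List.getD_cons_succ]
      obtain ⟨h1, -⟩ := List.pairwise_cons.mp hs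
      rcases lt_or_ge v r.length with hv | hv
      · rw [List.getD_eq_getElem _ _ hv]
        simpa using h1 _ (List.getElem_mem hv)
      · rw [List.getD_eq_default _ _ hv]
        simp

theorem getD_anti : ∀ (d : List ℕ), d.Pairwise (· ≥ ·) → ∀ v, d.getD (v+1) 0 ≤ d.getD v 0
  | [], _, v => by simp [List.getD]
  | x :: r, hs, 0 => by
    rw [List.getD_cons_succ, List.getD_cons_zero]
    exact le_trans (getD_le_headI (List.pairwise_cons.mp hs).2 0) (by
      cases r with
      | nil => simp
      | cons y s => exact (List.pairwise_cons.mp hs).1 y (by simp))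
  | x :: r, hs, v + 1 => by
    rw [List.getD_cons_succ, List.getD_cons_succ]
    exact getD_anti r (List.pairwise_cons.mp hs).2 v

theorem transpose_count {d : List ℕ} (hs : d.Pairwise (· ≥ ·)) (v : ℕ) :
    (transposeL d).count (v+1) = d.getD v 0 - d.getD (v+1) 0 := by
  rw [transposeL, List.count, List.countP_map]
  rw [List.countP_congr (q := fun i => decide (d.getD (v+1) 0 ≤ i ∧ i < d.getD v 0)) ?_]
  · rw [countP_range_ite]
    have e1 := getD_le_headI hs v
    have e2 := getD_le_headI hs (v+1)
    omega
  · intro i _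
    simp only [Function.comp_apply, beq_iff_eq, decide_eq_true_eq]
    have h1 := countP_ge (i+1) (by omega) d v hs
    have h2 := countP_ge (i+1) (by omega) d (v+1) hs
    omega

theorem transpose_sorted (d : List ℕ) : (transposeL d).Pairwise (· ≥ ·) := by
  rw [transposeL]
  apply List.Pairwise.map _ ?_ List.pairwise_le_range
  intro i j hij
  apply List.countP_mono_left
  intro x _ h
  simp only [decide_eq_true_eq] at h ⊢
  omega

theorem transpose_pos (a : ℕ) (t : List ℕ) : ∀ x ∈ transposeL (a :: t), 0 < x := by
  intro x hx
  rw [transposeL] at hx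
  obtain ⟨i, hi, rfl⟩ := List.mem_map.mp hx
  rw [List.mem_range] at hi
  apply List.countP_pos_iff.mpr
  exact ⟨a, by simp, by simpa using hi⟩

theorem transpose_count_zero (a : ℕ) (t : List ℕ) : (transposeL (a :: t)).count 0 = 0 := by
  rw [List.count_eq_zero]
  intro hmem
  obtain ⟨i, hi, h0⟩ := List.mem_map.mp hmem
  rw [List.mem_range] at hi
  have : 0 < (a :: t).countP fun x => decide (i + 1 ≤ x) :=
    List.countP_pos_iff.mpr ⟨a, by simp, by simpa using hi⟩
  omega

theorem transpose_sum {d : List ℕ} (hs : d.Pairwise (· ≥ ·)) : (transposeL d).sum = d.sum := by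
  rw [transposeL, list_range_map_sum, transpose_sum_aux]
  intro x hx
  cases d with
  | nil => simp at hx
  | cons y r =>
    rcases List.mem_cons.mp hx with rfl | hx
    · simp
    · simpa using (List.pairwise_cons.mp hs).1 x hx

theorem pairEven_tail_of_counts {d : List ℕ} (hs : d.Pairwise (· ≥ ·))
    (hc : ∀ i, Even i → Even ((transposeL d).count i)) : PairEven d.tail := by
  cases d with
  | nil => exact .nil
  | cons a t =>
    show PairEven t
    apply pairEven_of_getD
    intro k
    have h := hc (2*k+2) ⟨k+1, by ring⟩
    rw [show 2*k+2 = (2*k+1)+1 from rfl, transpose_count hs (2*k+1)] at h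
    have hanti := getD_anti _ hs (2*k+1)
    rw [Nat.even_sub hanti] at h
    have e1 : (a :: t).getD (2*k+1) 0 = t.getD (2*k) 0 := rfl
    have e2 : (a :: t).getD (2*k+1+1) 0 = t.getD (2*k+1) 0 := rfl
    rw [e1, e2] at h
    rw [Nat.even_add]
    exact h

theorem counts_of_pairEven_tail {d : List ℕ} (hs : d.Pairwise (· ≥ ·))
    (hpe : PairEven d.tail) : ∀ i, Even i → Even ((transposeL d).count i) := by
  intro i hi
  cases d with
  | nil => simp [transposeL]
  | cons a t =>
    cases i with
    | zero => rw [transpose_count_zero]; exact Even.zero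
    | succ v =>
      rw [transpose_count hs v]
      have hv : Odd v := by rw [Nat.even_iff] at hi; rw [Nat.odd_iff]; omega
      obtain ⟨k, rfl⟩ := hv
      have h := pairEven_getD hpe k
      have e1 : (a :: t).getD (2*k+1) 0 = t.getD (2*k) 0 := rfl
      have e2 : (a :: t).getD (2*k+1+1) 0 = t.getD (2*k+1) 0 := rfl
      have hanti := getD_anti _ hs (2*k+1)
      rw [Nat.even_sub hanti, e1, e2]
      rw [Nat.even_add] at h
      exact h


/-! ### main theorem -/

/-- a type B partition `d` of `2n+1` is special (its transpose is again a
type B partition) if and only if its (unique) block decomposition contains no block of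
type B1*. -/
theorem stmt9 (n : ℕ) (d : List ℕ) (hd : IsTypeBList d (2 * n + 1)) :
    IsTypeBList (transposeL d) (2 * n + 1) ↔
      ∃ Ts : List (List ℕ), (IsBlockDecomp d Ts ∧ B3AtEnd Ts) ∧
        ∀ T ∈ Ts, ¬ IsB1s T := by
  obtain ⟨hs, hpos, hsum, hcnt⟩ := hd
  constructor
  · rintro ⟨-, -, -, hTc⟩
    have hpe : PairEven d.tail := pairEven_tail_of_counts hs hTc
    have hodd : Odd d.sum := by rw [hsum]; exact ⟨n, by ring⟩
    obtain ⟨Ts, h1, h2, h3, h4⟩ := build d.length d le_rfl hs hpos hcnt hodd hpe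
    refine ⟨Ts, ⟨⟨h1, ?_⟩, h3⟩, h4⟩
    intro T hT
    rcases h2 T hT with h | h | h
    exacts [Or.inl h, Or.inr (Or.inr (Or.inl h)), Or.inr (Or.inr (Or.inr h))]
  · rintro ⟨Ts, ⟨⟨hflat, hblocks⟩, ⟨Ts', Tl, hTsEq, hTl, hnb3⟩⟩, hnb1s⟩
    have h12 : ∀ T ∈ Ts', IsB1 T ∨ IsB2 T := by
      intro T hT
      have hmem : T ∈ Ts := by rw [hTsEq]; exact List.mem_append_left _ hT
      rcases hblocks T hmem with h | h | h | h
      exacts [Or.inl h, absurd h (hnb1s T hmem), Or.inr h, absurd h (hnb3 T hT)]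
    have hspec : SpecL d := by
      rw [hflat, hTsEq]; exact specL_flatten Ts' Tl hTl h12
    obtain ⟨a, t, hdt, ha, hpe⟩ := hspec
    have hpet : PairEven d.tail := by rw [hdt]; exact hpe
    refine ⟨transpose_sorted d, ?_, ?_, counts_of_pairEven_tail hs hpet⟩
    · rw [hdt]; exact transpose_pos a t
    · rw [transpose_sum hs, hsum]
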